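/- Let k be a field, n ≥ 1 an integer, and g_n(t) = 2n·d(t) where d(t) is the distance from t to {k/n : k ∈ ℤ}. Let Q̄ be the finite poset with underlying set {(i,j) ∈ ℕ × ℕ : i ≤ j ≤ n} ∪ {⊤}, where (i,j) ⪯ (i',j') iff i' ≤ i and j ≤ j', and (i,j) ⪯ ⊤ for all (i,j). Define the functor N̄ : Q̄ ⥤ ModuleCat k by N̄(i,j) = the free k-module on the set of connected components of {t ∈ ℝ : i/n ≤ t ≤ j/n and g_n(t) ≤ 1/2}, and N̄(⊤) = the free k-module on the set of connected components of {t ∈ ℝ : 0 ≤ t ≤ 1 and g_n(t) ≤ 1} (which is [0,1], so N̄(⊤) ≅ k), with structure maps sending the basis element of a component to the basis element of the component containing it. Then N̄ is indecomposable: whenever N̄ is isomorphic to a biproduct A ⊞ B of functors Q̄ ⥤ ModuleCat k, either A is pointwise zero or B is pointwise zero. -/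

import Mathlib

open CategoryTheory

noncomputable section

/-- The map induced on connected components by an inclusion of subspaces. -/
def compMap {Y : Type} [TopologicalSpace Y] {A B : Set Y} (h : A ⊆ B) :
    ConnectedComponents A → ConnectedComponents B :=
  (continuous_inclusion h).connectedComponentsMap

lemma compMap_id {Y : Type} [TopologicalSpace Y] {A : Set Y} (h : A ⊆ A) :
    compMap h = id := by
  funext x
  obtain ⟨y, rfl⟩ := ConnectedComponents.surjective_coe x
  rfl

lemma compMap_comp {Y : Type} [TopologicalSpace Y] {A B C : Set Y}
    (hAB : A ⊆ B) (hBC : B ⊆ C) (hAC : A ⊆ C) :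
    compMap hAC = compMap hBC ∘ compMap hAB := by
  funext x
  obtain ⟨y, rfl⟩ := ConnectedComponents.surjective_coe x
  rfl

/-- The persistence module (valued in free `k`-modules on connected components)
associated to a monotone family of subspaces indexed by a poset. -/
def compFunctor (k : Type) [Field k] {α : Type} [Preorder α] {Y : Type} [TopologicalSpace Y]
    (A : α → Set Y) (mono : Monotone A) : α ⥤ ModuleCat k where
  obj p := ModuleCat.of k (ConnectedComponents (A p) →₀ k)
  map {p q} h := ModuleCat.ofHom (Finsupp.lmapDomain k k (compMap (mono (leOfHom h))))
  map_id p := by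
    apply ModuleCat.hom_ext
    show Finsupp.lmapDomain k k _ = _
    rw [compMap_id]; exact Finsupp.lmapDomain_id _ _
  map_comp {p q r} f g := by
    apply ModuleCat.hom_ext
    show Finsupp.lmapDomain k k _ = _
    rw [compMap_comp (mono (leOfHom f)) (mono (leOfHom g))]
    exact Finsupp.lmapDomain_comp _ _ _ _

/-- The sublevel set `S(a,b,c) = {t ∈ ℝ : a ≤ t ≤ b and g t ≤ c}`. -/
def Slev (g : ℝ → ℝ) (a b c : ℝ) : Set ℝ := {t : ℝ | a ≤ t ∧ t ≤ b ∧ g t ≤ c}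

/-- `g_n(t) = 2n·d(t)` where `d(t)` is the distance from `t` to the set
`{k/n : k ∈ ℤ}`. -/
def gfun (n : ℕ) (t : ℝ) : ℝ := 2 * n * Metric.infDist t {x : ℝ | ∃ k : ℤ, x = k / n}

/-- The poset `Q = {(i,j) ∈ ℕ × ℕ : i ≤ j ≤ n}` with `(i,j) ⪯ (i',j')` iff
`i' ≤ i` and `j ≤ j'`. -/
def QQ (n : ℕ) : Type := {ij : ℕ × ℕ // ij.1 ≤ ij.2 ∧ ij.2 ≤ n}

namespace QQ

variable {n : ℕ}

instance : PartialOrder (QQ n) where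
  le x y := y.1.1 ≤ x.1.1 ∧ x.1.2 ≤ y.1.2
  le_refl x := ⟨le_refl _, le_refl _⟩
  le_trans x y z h h' := ⟨h'.1.trans h.1, h.2.trans h'.2⟩
  le_antisymm x y h h' :=
    Subtype.ext (Prod.ext (le_antisymm h'.1 h.1) (le_antisymm h.2 h'.2))

/-- The first coordinate `i`. -/
def i (q : QQ n) : ℕ := q.1.1
/-- The second coordinate `j`. -/
def j (q : QQ n) : ℕ := q.1.2

end QQ

lemma SlevQ_mono (n : ℕ) :
    Monotone (fun q : QQ n => Slev (gfun n) ((q.i : ℝ) / n) ((q.j : ℝ) / n) (1 / 2)) := by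
  intro q q' h t ht
  have hn : (0 : ℝ) ≤ n := Nat.cast_nonneg n
  refine ⟨le_trans ?_ ht.1, le_trans ht.2.1 ?_, ht.2.2⟩
  · exact div_le_div_of_nonneg_right (by exact_mod_cast h.1) hn
  · exact div_le_div_of_nonneg_right (by exact_mod_cast h.2) hn

/-- The persistence module `N : Q ⥤ ModuleCat k`, assigning to `(i,j)` the free
`k`-module on the set of connected components of `S(i/n, j/n, 1/2)` for the function
`g_n`. -/
def Nfunctor (k : Type) [Field k] (n : ℕ) : QQ n ⥤ ModuleCat k :=
  compFunctor k (fun q : QQ n => Slev (gfun n) ((q.i : ℝ) / n) ((q.j : ℝ) / n) (1 / 2))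
    (SlevQ_mono n)

/-- The interval module `P_m : Q ⥤ ModuleCat k`:  its value at `(i,j)` is the free
`k`-module on a one-element type if `i ≤ m ≤ j` (hence isomorphic to `k`) and the free
`k`-module on the empty type (hence `0`) otherwise, and its structure maps send a basis
element to the corresponding basis element (the identity `k → k`) whenever both values
are nonzero, and are zero otherwise. -/
def Pm (k : Type) [Field k] (n m : ℕ) : QQ n ⥤ ModuleCat k where
  obj q := ModuleCat.of k (PLift (q.i ≤ m ∧ m ≤ q.j) →₀ k)
  map {q q'} h := ModuleCat.ofHom (Finsupp.lmapDomain k k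
    (fun hp => PLift.up ⟨le_trans (leOfHom h).1 hp.down.1, hp.down.2.trans (leOfHom h).2⟩))
  map_id q := by
    apply ModuleCat.hom_ext
    show Finsupp.lmapDomain k k _ = _
    rw [show (fun hp : PLift (q.i ≤ m ∧ m ≤ q.j) =>
        PLift.up (⟨le_trans (leOfHom (𝟙 q)).1 hp.down.1, hp.down.2.trans (leOfHom (𝟙 q)).2⟩ :
          q.i ≤ m ∧ m ≤ q.j)) = id from funext fun _ => Subsingleton.elim _ _]
    exact Finsupp.lmapDomain_id _ _
  map_comp {q q' q''} f g := by
    apply ModuleCat.hom_ext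
    show Finsupp.lmapDomain k k _ = _
    rw [show (fun hp : PLift (q.i ≤ m ∧ m ≤ q.j) =>
        (PLift.up ⟨le_trans (leOfHom (f ≫ g)).1 hp.down.1,
          hp.down.2.trans (leOfHom (f ≫ g)).2⟩ : PLift (q''.i ≤ m ∧ m ≤ q''.j))) =
        (fun hp : PLift (q'.i ≤ m ∧ m ≤ q'.j) =>
          (PLift.up ⟨le_trans (leOfHom g).1 hp.down.1, hp.down.2.trans (leOfHom g).2⟩ :
            PLift (q''.i ≤ m ∧ m ≤ q''.j))) ∘
        (fun hp : PLift (q.i ≤ m ∧ m ≤ q.j) =>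
          (PLift.up ⟨le_trans (leOfHom f).1 hp.down.1, hp.down.2.trans (leOfHom f).2⟩ :
            PLift (q'.i ≤ m ∧ m ≤ q'.j))) from funext fun _ => Subsingleton.elim _ _]
    exact Finsupp.lmapDomain_comp _ _ _ _

end

/-- The family of sublevel sets indexed by `Q̄ = Q ∪ {⊤}`:  the element `(i,j)` is sent
to `S(i/n, j/n, 1/2)` and the top element `⊤` is sent to `S(0, 1, 1)` (for `g_n` the
latter is all of `[0,1]`). -/
def SQbar (n : ℕ) : WithTop (QQ n) → Set ℝ :=
  WithTop.recTopCoe (Slev (gfun n) 0 1 1)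
    (fun q => Slev (gfun n) ((q.i : ℝ) / n) ((q.j : ℝ) / n) (1 / 2))

lemma SQbar_mono (n : ℕ) : Monotone (SQbar n) := by
  intro x y h
  induction y using WithTop.recTopCoe with
  | top =>
    induction x using WithTop.recTopCoe with
    | top => exact Set.Subset.refl _
    | coe q =>
      intro t ht
      simp only [SQbar, WithTop.recTopCoe_coe, WithTop.recTopCoe_top, Slev,
        Set.mem_setOf_eq] at ht ⊢
      refine ⟨le_trans (by positivity) ht.1, le_trans ht.2.1 ?_, ht.2.2.trans (by norm_num)⟩
      rcases Nat.eq_zero_or_pos n with h0 | h0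
      · subst h0
        simp
      · have hn : (0 : ℝ) < n := by exact_mod_cast h0
        rw [div_le_one hn]
        exact_mod_cast q.2.2
  | coe q' =>
    induction x using WithTop.recTopCoe with
    | top => exact absurd h (by simp)
    | coe q =>
      exact SlevQ_mono n (WithTop.coe_le_coe.mp h)

/-- The persistence module `N̄ : Q̄ ⥤ ModuleCat k`, assigning to `(i,j)` the free
`k`-module on the set of connected components of `S(i/n, j/n, 1/2)` and to `⊤` the free
`k`-module on the set of connected components of `S(0,1,1) = [0,1]` (so `N̄(⊤) ≅ k`),
with structure maps sending the basis element of a component to the basis element of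
the component containing it. -/
noncomputable def Nbar (k : Type) [Field k] (n : ℕ) : WithTop (QQ n) ⥤ ModuleCat k :=
  compFunctor k (SQbar n) (SQbar_mono n)

noncomputable section IndecompProof

open Metric Set Finsupp CategoryTheory.Limits

/-- Connected components of a preconnected space form a subsingleton. -/
lemma cc_subsingleton {X : Type} [TopologicalSpace X] [PreconnectedSpace X] :
    Subsingleton (ConnectedComponents X) := by
  constructor
  intro a b
  obtain ⟨x, rfl⟩ := ConnectedComponents.surjective_coe a
  obtain ⟨y, rfl⟩ := ConnectedComponents.surjective_coe b
  exact ConnectedComponents.coe_eq_coe.2 (by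
    rw [PreconnectedSpace.connectedComponent_eq_univ,
      PreconnectedSpace.connectedComponent_eq_univ])

lemma compMap_mk {Y : Type} [TopologicalSpace Y] {A B : Set Y} (h : A ⊆ B) (x : A) :
    compMap h (ConnectedComponents.mk x) = ConnectedComponents.mk (Set.inclusion h x) := rfl

section Geometry

variable {n : ℕ}

lemma abs_div_cast (hn : 1 ≤ n) (t : ℝ) (m : ℤ) :
    |t - (m : ℝ) / n| = |(n : ℝ) * t - m| / n := by
  have hnpos : (0 : ℝ) < n := by exact_mod_cast hn
  rw [show t - (m : ℝ) / n = ((n : ℝ) * t - m) / n by field_simp, abs_div,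
    abs_of_pos hnpos]

lemma infDist_grid_eq (hn : 1 ≤ n) (t : ℝ) :
    Metric.infDist t {x : ℝ | ∃ k : ℤ, x = k / n} = |t - (round ((n : ℝ) * t) : ℝ) / n| := by
  have hnpos : (0 : ℝ) < n := by exact_mod_cast hn
  refine le_antisymm (le_trans
    (Metric.infDist_le_dist_of_mem ⟨round ((n : ℝ) * t), rfl⟩)
    (le_of_eq (Real.dist_eq _ _))) ?_
  rw [Metric.infDist_eq_iInf]
  have : Nonempty {x : ℝ | ∃ k : ℤ, x = k / n} := Set.Nonempty.to_subtype ⟨(0 : ℝ), 0, by simp⟩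
  refine le_ciInf fun y => ?_
  obtain ⟨yv, k, hk⟩ := y
  simp only [hk, Real.dist_eq]
  rw [abs_div_cast hn t, abs_div_cast hn t]
  exact div_le_div_of_nonneg_right (round_le ((n : ℝ) * t) k) hnpos.le

lemma gfun_eq (hn : 1 ≤ n) (t : ℝ) :
    gfun n t = 2 * |(n : ℝ) * t - round ((n : ℝ) * t)| := by
  have hnpos : (0 : ℝ) < n := by exact_mod_cast hn
  rw [gfun, infDist_grid_eq hn t, abs_div_cast hn t]
  field_simp

lemma gfun_le_one (hn : 1 ≤ n) (t : ℝ) : gfun n t ≤ 1 := by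
  rw [gfun_eq hn t]
  have := abs_sub_round ((n : ℝ) * t)
  linarith

lemma gfun_le_half (hn : 1 ≤ n) {t : ℝ} (h : gfun n t ≤ 1 / 2) :
    |t - (round ((n : ℝ) * t) : ℝ) / n| ≤ 1 / (4 * n) := by
  have hnpos : (0 : ℝ) < n := by exact_mod_cast hn
  rw [gfun_eq hn t] at h
  rw [abs_div_cast hn t]
  have h4 : |(n : ℝ) * t - round ((n : ℝ) * t)| ≤ 1 / 4 := by linarith
  calc |(n : ℝ) * t - round ((n : ℝ) * t)| / n ≤ (1 / 4) / n :=
        div_le_div_of_nonneg_right h4 hnpos.le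
    _ = 1 / (4 * n) := by rw [div_div]

lemma gfun_grid (m : ℤ) : gfun n ((m : ℝ) / n) = 0 := by
  have hmem : ((m : ℝ) / n) ∈ {x : ℝ | ∃ k : ℤ, x = k / n} := ⟨m, rfl⟩
  rw [gfun, Metric.infDist_zero_of_mem hmem, mul_zero]

lemma Slev_top_eq (hn : 1 ≤ n) : Slev (gfun n) 0 1 1 = Set.Icc (0 : ℝ) 1 := by
  ext t
  simp only [Slev, Set.mem_setOf_eq, Set.mem_Icc]
  exact ⟨fun h => ⟨h.1, h.2.1⟩, fun h => ⟨h.1, h.2, gfun_le_one hn t⟩⟩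

/-- Every point of `S(i/n, j/n, 1/2)` lies in the same connected component as some grid
point `m/n` with `i ≤ m ≤ j`. -/
lemma exists_grid_component (hn : 1 ≤ n) (q : QQ n)
    (z : SQbar n (q : WithTop (QQ n))) :
    ∃ (m : ℕ) (_ : q.i ≤ m ∧ m ≤ q.j) (hp : ((m : ℝ) / n) ∈ SQbar n (q : WithTop (QQ n))),
      (ConnectedComponents.mk (⟨(m : ℝ) / n, hp⟩ : SQbar n (q : WithTop (QQ n)))) =
        ConnectedComponents.mk z := by
  have hnpos : (0 : ℝ) < n := by exact_mod_cast hn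
  obtain ⟨t, h1, h2, h3⟩ := z
  have habs : |(n : ℝ) * t - round ((n : ℝ) * t)| ≤ 1 / 4 := by
    have h' := h3
    rw [gfun_eq hn t] at h'
    linarith
  have htr : |t - (round ((n : ℝ) * t) : ℝ) / n| ≤ 1 / (4 * n) := gfun_le_half hn h3
  have e1 : (q.i : ℝ) ≤ t * n := (div_le_iff₀ hnpos).1 h1
  have e2 : t * n ≤ (q.j : ℝ) := (le_div_iff₀ hnpos).1 h2
  obtain ⟨hb1, hb2⟩ := abs_le.1 habs
  have hcm : t * (n : ℝ) = (n : ℝ) * t := mul_comm _ _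
  have hir : (q.i : ℤ) ≤ round ((n : ℝ) * t) := by
    have hR : ((q.i : ℤ) : ℝ) < ((round ((n : ℝ) * t) + 1 : ℤ) : ℝ) := by push_cast; linarith
    exact Int.lt_add_one_iff.1 (by exact_mod_cast hR)
  have hrj : round ((n : ℝ) * t) ≤ (q.j : ℤ) := by
    have hR : ((round ((n : ℝ) * t) : ℤ) : ℝ) < (((q.j : ℤ) + 1 : ℤ) : ℝ) := by push_cast; linarith
    exact Int.lt_add_one_iff.1 (by exact_mod_cast hR)
  have hr0 : 0 ≤ round ((n : ℝ) * t) := le_trans (Int.natCast_nonneg q.i) hir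
  obtain ⟨m, hm⟩ : ∃ m : ℕ, (m : ℤ) = round ((n : ℝ) * t) := ⟨_, Int.toNat_of_nonneg hr0⟩
  have hmR : (m : ℝ) = (round ((n : ℝ) * t) : ℝ) := by exact_mod_cast hm
  have hpmem : ((m : ℝ) / n) ∈ SQbar n (q : WithTop (QQ n)) := by
    refine ⟨?_, ?_, ?_⟩
    · refine div_le_div_of_nonneg_right ?_ hnpos.le
      exact_mod_cast hm ▸ hir
    · refine div_le_div_of_nonneg_right ?_ hnpos.le
      exact_mod_cast hm ▸ hrj
    · have hg : gfun n ((m : ℝ) / n) = 0 := by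
        have := gfun_grid (n := n) (m : ℤ)
        push_cast at this
        exact this
      rw [hg]; norm_num
  have hdist_tp : |t - (m : ℝ) / n| ≤ 1 / (4 * n) := by rw [hmR]; exact htr
  have hKsub : Set.Icc (min t ((m : ℝ) / n)) (max t ((m : ℝ) / n)) ⊆
      SQbar n (q : WithTop (QQ n)) := by
    rintro s ⟨hs1, hs2⟩
    have hsd : |s - (m : ℝ) / n| ≤ 1 / (4 * n) := by
      obtain ⟨u1, u2⟩ := abs_le.1 hdist_tp
      have h4n : (0 : ℝ) < 1 / (4 * n) := by positivity
      rcases le_total t ((m : ℝ) / n) with hc | hc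
      · rw [min_eq_left hc] at hs1; rw [max_eq_right hc] at hs2
        exact abs_le.2 ⟨by linarith, by linarith⟩
      · rw [min_eq_right hc] at hs1; rw [max_eq_left hc] at hs2
        exact abs_le.2 ⟨by linarith, by linarith⟩
    have hinf : Metric.infDist s {x : ℝ | ∃ k : ℤ, x = k / n} ≤ 1 / (4 * n) := by
      refine le_trans (Metric.infDist_le_dist_of_mem
        (show ((m : ℝ) / n) ∈ {x : ℝ | ∃ k : ℤ, x = k / n} from ⟨(m : ℤ), by push_cast; ring⟩)) ?_
      rw [Real.dist_eq]
      exact hsd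
    refine ⟨le_trans (le_min h1 hpmem.1) hs1, le_trans hs2 (max_le h2 hpmem.2.1), ?_⟩
    have hmul := mul_le_mul_of_nonneg_left hinf (show (0 : ℝ) ≤ 2 * n by positivity)
    refine le_trans hmul ?_
    rw [show (2 : ℝ) * n * (1 / (4 * n)) = 1 / 2 by field_simp; ring]
  refine ⟨m, ⟨by exact_mod_cast hm ▸ hir, by exact_mod_cast hm ▸ hrj⟩, hpmem, ?_⟩
  have hTpre : _root_.IsPreconnected ((Subtype.val : SQbar n (q : WithTop (QQ n)) → ℝ) ⁻¹'
      Set.Icc (min t ((m : ℝ) / n)) (max t ((m : ℝ) / n))) := by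
    refine Topology.IsInducing.subtypeVal.isPreconnected_image.mp ?_
    rw [Set.image_preimage_eq_inter_range, Subtype.range_coe,
      Set.inter_eq_self_of_subset_left hKsub]
    exact isPreconnected_Icc
  have hmem1 : (⟨(m : ℝ) / n, hpmem⟩ : SQbar n (q : WithTop (QQ n))) ∈
      ((Subtype.val : SQbar n (q : WithTop (QQ n)) → ℝ) ⁻¹'
        Set.Icc (min t ((m : ℝ) / n)) (max t ((m : ℝ) / n))) :=
    ⟨min_le_right _ _, le_max_right _ _⟩
  have hmem2 : (⟨t, h1, h2, h3⟩ : SQbar n (q : WithTop (QQ n))) ∈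
      ((Subtype.val : SQbar n (q : WithTop (QQ n)) → ℝ) ⁻¹'
        Set.Icc (min t ((m : ℝ) / n)) (max t ((m : ℝ) / n))) :=
    ⟨min_le_left _ _, le_max_left _ _⟩
  exact ConnectedComponents.coe_eq_coe'.2 (hTpre.subset_connectedComponent hmem2 hmem1)

end Geometry

section Algebra

variable (k : Type) [Field k]

lemma endo_zero_or_id {C : Type} [Subsingleton C] (c₀ : C)
    (ψ : (C →₀ k) →ₗ[k] (C →₀ k)) (hψ : ∀ v, ψ (ψ v) = ψ v) :
    ψ = 0 ∨ ψ = LinearMap.id := by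
  have hrepr : ∀ v : (C →₀ k), v = Finsupp.single c₀ (v c₀) := by
    intro v
    ext c
    rw [Subsingleton.elim c c₀, Finsupp.single_eq_same]
  set a : k := ψ (Finsupp.single c₀ 1) c₀ with ha
  have hψ1 : ψ (Finsupp.single c₀ 1) = Finsupp.single c₀ a := hrepr _
  have hsmul : ∀ b : k, ψ (Finsupp.single c₀ b) = Finsupp.single c₀ (b * a) := by
    intro b
    have hb : Finsupp.single c₀ b = b • Finsupp.single c₀ (1 : k) := by
      rw [Finsupp.smul_single, smul_eq_mul, mul_one]
    rw [hb, map_smul, hψ1, Finsupp.smul_single, smul_eq_mul]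
  have haa : a * a = a := by
    have h2 := hψ (Finsupp.single c₀ 1)
    rw [hψ1, hsmul a] at h2
    have h3 := DFunLike.congr_fun h2 c₀
    simpa [Finsupp.single_eq_same] using h3
  have hcases : a = 0 ∨ a = 1 := by
    rcases mul_eq_zero.1 (show a * (a - 1) = 0 by rw [mul_sub, mul_one, haa, sub_self]) with
      hc | hc
    · exact Or.inl hc
    · exact Or.inr (by rwa [sub_eq_zero] at hc)
  rcases hcases with hc | hc
  · refine Or.inl (Finsupp.lhom_ext fun c b => ?_)
    rw [Subsingleton.elim c c₀, hsmul b, hc, mul_zero, Finsupp.single_zero]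
    rfl
  · refine Or.inr (Finsupp.lhom_ext fun c b => ?_)
    rw [Subsingleton.elim c c₀, hsmul b, hc, mul_one]
    rfl

lemma Nbar_map_single {n : ℕ} {x y : WithTop (QQ n)} (f : x ⟶ y)
    (c : _root_.ConnectedComponents (SQbar n x)) (b : k) :
    (Nbar k n).map f (Finsupp.single c b) =
      Finsupp.single (compMap (SQbar_mono n (leOfHom f)) c) b := by
  show Finsupp.mapDomain _ (Finsupp.single c b) = _
  exact Finsupp.mapDomain_single

lemma Nbar_app_eq_id (n : ℕ) (hn : 1 ≤ n) (φ : Nbar k n ⟶ Nbar k n)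
    (htop : φ.app ⊤ = 𝟙 _) : ∀ x, φ.app x = 𝟙 _ := by
  have hmm_id : ∀ q' : QQ n, q'.i = q'.j → φ.app (↑q' : WithTop (QQ n)) = 𝟙 _ := by
    intro q' hq'
    haveI hsub : Subsingleton (_root_.ConnectedComponents (SQbar n (↑q' : WithTop (QQ n)))) := by
      haveI : Subsingleton (SQbar n (↑q' : WithTop (QQ n))) := by
        refine (Set.subsingleton_coe _).2 ?_
        intro a ha b hb
        have h1 : a = (q'.i : ℝ) / n := le_antisymm (hq' ▸ ha.2.1) ha.1
        have h2 : b = (q'.i : ℝ) / n := le_antisymm (hq' ▸ hb.2.1) hb.1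
        rw [h1, h2]
      constructor
      intro u v
      obtain ⟨u, rfl⟩ := ConnectedComponents.surjective_coe u
      obtain ⟨v, rfl⟩ := ConnectedComponents.surjective_coe v
      rw [Subsingleton.elim u v]
    have hnat := φ.naturality (homOfLE (le_top : (↑q' : WithTop (QQ n)) ≤ ⊤))
    rw [htop, Category.comp_id] at hnat
    have hinj : Function.Injective
        ⇑((Nbar k n).map (homOfLE (le_top : (↑q' : WithTop (QQ n)) ≤ ⊤))) :=
      by show Function.Injective (Finsupp.mapDomain _); exact Finsupp.mapDomain_injective fun a b _ => Subsingleton.elim a b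
    refine ModuleCat.hom_ext (LinearMap.ext fun v => ?_)
    apply hinj
    have h2 := LinearMap.congr_fun (congrArg ModuleCat.Hom.hom hnat) v
    simp only [ModuleCat.hom_comp, LinearMap.comp_apply] at h2
    exact h2.symm
  intro x
  induction x using WithTop.recTopCoe with
  | top => exact htop
  | coe q =>
    refine ModuleCat.hom_ext (Finsupp.lhom_ext fun C b => ?_)
    obtain ⟨z, rfl⟩ := ConnectedComponents.surjective_coe C
    obtain ⟨m, hm, hp, hcomp⟩ := exists_grid_component hn q z
    have hq'mem : (m, m).1 ≤ (m, m).2 ∧ (m, m).2 ≤ n := ⟨le_refl m, le_trans hm.2 q.2.2⟩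
    set q' : QQ n := ⟨(m, m), hq'mem⟩ with hq'def
    have hle : (↑q' : WithTop (QQ n)) ≤ ↑q := WithTop.coe_le_coe.2 ⟨hm.1, hm.2⟩
    have hnat := φ.naturality (homOfLE hle)
    rw [hmm_id q' rfl, Category.id_comp] at hnat
    have hp' : ((m : ℝ) / n) ∈ SQbar n (↑q' : WithTop (QQ n)) := by
      refine ⟨le_refl _, le_refl _, ?_⟩
      have hg : gfun n ((m : ℝ) / n) = 0 := by
        have hg' := gfun_grid (n := n) (m : ℤ)
        push_cast at hg'
        exact hg'
      rw [hg]; norm_num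
    have happ : φ.app (↑q : WithTop (QQ n)) ((Nbar k n).map (homOfLE hle)
          (Finsupp.single (ConnectedComponents.mk
            (⟨(m : ℝ) / n, hp'⟩ : SQbar n (↑q' : WithTop (QQ n)))) b)) =
        (Nbar k n).map (homOfLE hle)
          (Finsupp.single (ConnectedComponents.mk
            (⟨(m : ℝ) / n, hp'⟩ : SQbar n (↑q' : WithTop (QQ n)))) b) :=
      LinearMap.congr_fun (congrArg ModuleCat.Hom.hom hnat) _
    rw [Nbar_map_single] at happ
    have hcc : compMap (SQbar_mono n (leOfHom (homOfLE hle)))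
        (ConnectedComponents.mk (⟨(m : ℝ) / n, hp'⟩ : SQbar n (↑q' : WithTop (QQ n)))) =
        ConnectedComponents.mk z := by
      rw [compMap_mk]
      exact hcomp
    rw [hcc] at happ
    exact happ

end Algebra


end IndecompProof

/-- **Indecomposability of the augmented persistence module `N̄`**
(Section `sec:arb-dim`).  Whenever `N̄` is isomorphic to a biproduct `A ⊞ B` of functors
`Q̄ ⥤ ModuleCat k`, either `A` is pointwise zero or `B` is pointwise zero. -/
theorem Nbar_indecomposable (k : Type) [Field k] (n : ℕ) (hn : 1 ≤ n)
    (A B : WithTop (QQ n) ⥤ ModuleCat k) (h : Nbar k n ≅ A ⊞ B) :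
    (∀ x : WithTop (QQ n), CategoryTheory.Limits.IsZero (A.obj x)) ∨
    (∀ x : WithTop (QQ n), CategoryTheory.Limits.IsZero (B.obj x)) := by
  classical
  open CategoryTheory.Limits in
  set e : Nbar k n ⟶ Nbar k n := h.hom ≫ biprod.fst ≫ biprod.inl ≫ h.inv with he_def
  set f : Nbar k n ⟶ Nbar k n := h.hom ≫ biprod.snd ≫ biprod.inr ≫ h.inv with hf_def
  have hef : e + f = 𝟙 _ := by
    have htot : h.hom ≫ (biprod.fst ≫ biprod.inl + biprod.snd ≫ biprod.inr) ≫ h.inv =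
        𝟙 (Nbar k n) := by
      rw [biprod.total, Category.id_comp, h.hom_inv_id]
    rw [Preadditive.add_comp, Preadditive.comp_add] at htot
    simpa [he_def, hf_def, Category.assoc] using htot
  have hee : e ≫ e = e := by
    rw [he_def]
    simp [Category.assoc]
  -- instances at ⊤
  have hset : SQbar n (⊤ : WithTop (QQ n)) = Set.Icc (0 : ℝ) 1 := Slev_top_eq hn
  haveI hpc : PreconnectedSpace (SQbar n (⊤ : WithTop (QQ n))) := by
    refine Subtype.preconnectedSpace ?_
    rw [hset]
    exact isPreconnected_Icc
  haveI hcsub : Subsingleton (_root_.ConnectedComponents (SQbar n (⊤ : WithTop (QQ n)))) :=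
    cc_subsingleton
  have h0mem : (0 : ℝ) ∈ SQbar n (⊤ : WithTop (QQ n)) := by
    rw [hset]; exact ⟨le_refl _, zero_le_one⟩
  -- `e.app ⊤` is an idempotent endomorphism of a rank-one module
  have happ : ∀ v, (e.app ⊤) ((e.app ⊤) v) = (e.app ⊤) v := by
    intro v
    have h2 : e.app (⊤ : WithTop (QQ n)) ≫ e.app ⊤ = e.app ⊤ := by
      rw [← NatTrans.comp_app, hee]
    exact LinearMap.congr_fun (congrArg ModuleCat.Hom.hom h2) v
  have hcase := endo_zero_or_id k (ConnectedComponents.mk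
    (⟨(0 : ℝ), h0mem⟩ : SQbar n (⊤ : WithTop (QQ n)))) (e.app ⊤).hom happ
  rcases hcase with h0 | h1
  · -- e.app ⊤ = 0, so f.app ⊤ = 𝟙 and f = 𝟙, e = 0, A is pointwise zero
    have hf_top : f.app (⊤ : WithTop (QQ n)) = 𝟙 _ := by
      have h2 := congrArg (fun α : Nbar k n ⟶ Nbar k n => α.app (⊤ : WithTop (QQ n))) hef
      simp only [NatTrans.app_add] at h2
      rw [show e.app (⊤ : WithTop (QQ n)) = 0 from ModuleCat.hom_ext (by rw [ModuleCat.hom_zero]; exact h0)] at h2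
      rw [zero_add] at h2
      exact h2
    have hfid := Nbar_app_eq_id k n hn f hf_top
    have hf1 : f = 𝟙 _ := by
      apply NatTrans.ext
      funext x
      exact hfid x
    have he0 : e = 0 := by
      have h2 : e = 𝟙 (Nbar k n) - f := eq_sub_of_add_eq hef
      rw [h2, hf1, sub_self]
    left
    intro x
    have hAzero : (biprod.fst ≫ biprod.inl : A ⊞ B ⟶ A ⊞ B) = 0 := by
      have h2 : h.inv ≫ e ≫ h.hom = biprod.fst ≫ biprod.inl := by
        rw [he_def]
        simp [Category.assoc]
      rw [← h2, he0]
      simp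
    rw [CategoryTheory.Limits.IsZero.iff_id_eq_zero]
    have hsplit : (biprod.inl : A ⟶ A ⊞ B).app x ≫ (biprod.fst : A ⊞ B ⟶ A).app x =
        𝟙 (A.obj x) := by
      rw [← NatTrans.comp_app, biprod.inl_fst, NatTrans.id_app]
    calc 𝟙 (A.obj x)
        = ((biprod.inl : A ⟶ A ⊞ B).app x ≫ (biprod.fst : A ⊞ B ⟶ A).app x) ≫ (biprod.inl : A ⟶ A ⊞ B).app x ≫ (biprod.fst : A ⊞ B ⟶ A).app x := by
          rw [hsplit, Category.comp_id]
      _ = (biprod.inl : A ⟶ A ⊞ B).app x ≫ (biprod.fst ≫ biprod.inl : A ⊞ B ⟶ A ⊞ B).app x ≫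
            (biprod.fst : A ⊞ B ⟶ A).app x := by
          rw [NatTrans.comp_app, Category.assoc, Category.assoc]
      _ = 0 := by rw [hAzero]; simp
  · -- e.app ⊤ = 𝟙, so e = 𝟙, f = 0, B is pointwise zero
    have he_top : e.app (⊤ : WithTop (QQ n)) = 𝟙 _ := ModuleCat.hom_ext h1
    have heid := Nbar_app_eq_id k n hn e he_top
    have he1 : e = 𝟙 _ := by
      apply NatTrans.ext
      funext x
      exact heid x
    have hf0 : f = 0 := by
      have h2 : f = 𝟙 (Nbar k n) - e := eq_sub_of_add_eq (by rw [add_comm]; exact hef)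
      rw [h2, he1, sub_self]
    right
    intro x
    have hBzero : (biprod.snd ≫ biprod.inr : A ⊞ B ⟶ A ⊞ B) = 0 := by
      have h2 : h.inv ≫ f ≫ h.hom = biprod.snd ≫ biprod.inr := by
        rw [hf_def]
        simp [Category.assoc]
      rw [← h2, hf0]
      simp
    rw [CategoryTheory.Limits.IsZero.iff_id_eq_zero]
    have hsplit : (biprod.inr : B ⟶ A ⊞ B).app x ≫ (biprod.snd : A ⊞ B ⟶ B).app x =
        𝟙 (B.obj x) := by
      rw [← NatTrans.comp_app, biprod.inr_snd, NatTrans.id_app]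
    calc 𝟙 (B.obj x)
        = ((biprod.inr : B ⟶ A ⊞ B).app x ≫ (biprod.snd : A ⊞ B ⟶ B).app x) ≫ (biprod.inr : B ⟶ A ⊞ B).app x ≫ (biprod.snd : A ⊞ B ⟶ B).app x := by
          rw [hsplit, Category.comp_id]
      _ = (biprod.inr : B ⟶ A ⊞ B).app x ≫ (biprod.snd ≫ biprod.inr : A ⊞ B ⟶ A ⊞ B).app x ≫
            (biprod.snd : A ⊞ B ⟶ B).app x := by
          rw [NatTrans.comp_app, Category.assoc, Category.assoc]
      _ = 0 := by rw [hBzero]; simp
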